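/- Let a be a weak composition with nonzero entries in positions n_1 < ... < n_ℓ, and let g be a glide of a (a weak komposition obtainable from a by finitely many local moves (m.1) 0p ⇒ p0, (m.2) 0p ⇒ qr with q+r=p, (m.3) 0p ⇒ q r̄ with q+r=p+1 and r̄ colored red). Then there is at most one weak composition b with b⁺ = a⁺ such that g is a mesonic glide of b. -/

import Mathlib

abbrev Komp : Type := List (ℕ × Bool)

def kex (g : Komp) : ℕ := (g.filter (fun p => p.2)).length

def kval (g : Komp) : List ℕ := g.map Prod.fst

def toKomp (a : List ℕ) : Komp := a.map (fun v => (v, false))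

inductive GlideMove : Komp → Komp → Prop
  | m1 (l r : Komp) (p : ℕ) (c : Bool) (hp : 0 < p) :
      GlideMove (l ++ (0, false) :: (p, c) :: r) (l ++ (p, c) :: (0, false) :: r)
  | m2 (l r : Komp) (p q s : ℕ) (c : Bool) (hq : 0 < q) (hs : 0 < s) (h : q + s = p) :
      GlideMove (l ++ (0, false) :: (p, c) :: r) (l ++ (q, c) :: (s, false) :: r)
  | m3 (l r : Komp) (p q s : ℕ) (c : Bool) (hq : 0 < q) (hs : 0 < s) (h : q + s = p + 1) :
      GlideMove (l ++ (0, false) :: (p, c) :: r) (l ++ (q, c) :: (s, true) :: r)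

def IsGlide (a : List ℕ) (g : Komp) : Prop :=
  Relation.ReflTransGen GlideMove (toKomp a) g

def BlackFirst (seg : Komp) : Prop :=
  ∀ p ∈ (seg.dropWhile fun q => q.1 == 0).head?, p.2 = false

def IsBlock (v : ℕ) (seg : Komp) : Prop :=
  (kval seg).sum = v + kex seg ∧
  (∀ p ∈ seg, p.2 = true → 0 < p.1) ∧
  BlackFirst seg ∧
  (∀ p ∈ seg.getLast?, p.1 ≠ 0)

inductive MesonicGlide : List ℕ → Komp → Prop
  | zeros (k : ℕ) :
      MesonicGlide (List.replicate k 0) (List.replicate k ((0 : ℕ), false))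
  | block (z v : ℕ) (hv : 0 < v) (seg : Komp) (a' : List ℕ) (g' : Komp)
      (hlen : seg.length = z + 1) (hseg : IsBlock v seg)
      (h : MesonicGlide a' g') :
      MesonicGlide (List.replicate z 0 ++ v :: a') (seg ++ g')
def Dominates (b a : List ℕ) : Prop :=
  b.length = a.length ∧ ∀ i : ℕ, (a.take i).sum ≤ (b.take i).sum

def posPart (a : List ℕ) : List ℕ := a.filter (fun v => v != 0)


lemma kex_append (l r : Komp) : kex (l ++ r) = kex l + kex r := by
  simp [kex, List.filter_append]

lemma kval_append (l r : Komp) : kval (l ++ r) = kval l ++ kval r := by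
  simp [kval]

lemma kex_le_sum {t : Komp} (hpos : ∀ p ∈ t, p.2 = true → 0 < p.1) :
    kex t ≤ (kval t).sum := by
  induction t with
  | nil => simp [kex, kval]
  | cons p t ih =>
    have ih' := ih (fun q hq => hpos q (List.mem_cons_of_mem _ hq))
    simp only [kex, kval, List.filter_cons, List.map_cons, List.sum_cons] at ih' ⊢
    by_cases hc : p.2 = true
    · have hp1 : 0 < p.1 := hpos p List.mem_cons_self hc
      rw [if_pos hc]
      simp only [List.length_cons]
      omega
    · rw [if_neg hc]
      omega

lemma kex_lt_sum {t : Komp} {q : ℕ × Bool} (hq : q ∈ t) (hqb : q.2 = false)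
    (hq1 : 0 < q.1) (hpos : ∀ p ∈ t, p.2 = true → 0 < p.1) :
    kex t < (kval t).sum := by
  induction t with
  | nil => simp at hq
  | cons p t ih =>
    have hpos' : ∀ r ∈ t, r.2 = true → 0 < r.1 :=
      fun r hr => hpos r (List.mem_cons_of_mem _ hr)
    simp only [kex, kval, List.filter_cons, List.map_cons, List.sum_cons]
    rcases List.mem_cons.mp hq with rfl | hq'
    · have hle := kex_le_sum hpos'
      simp only [kex, kval] at hle
      rw [if_neg (by simp [hqb])]
      omega
    · have hlt := ih hq' hpos'
      simp only [kex, kval] at hlt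
      by_cases hc : p.2 = true
      · have hp1 : 0 < p.1 := hpos p List.mem_cons_self hc
        rw [if_pos hc]
        simp only [List.length_cons]
        omega
      · rw [if_neg hc]
        omega

lemma mes_red_pos {b : List ℕ} {g : Komp} (m : MesonicGlide b g) :
    ∀ p ∈ g, p.2 = true → 0 < p.1 := by
  induction m with
  | zeros k =>
    intro p hp ht
    have := List.eq_of_mem_replicate hp
    subst this; simp at ht
  | block z v hv seg a' g' hlen hseg h ih =>
    intro p hp ht
    rcases List.mem_append.mp hp with h1 | h2
    · exact hseg.2.1 p h1 ht
    · exact ih p h2 ht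

lemma seg_ne_nil {v : ℕ} {seg : Komp} (hseg : IsBlock v seg) {z : ℕ}
    (hlen : seg.length = z + 1) : seg ≠ [] := by
  intro h; rw [h] at hlen; simp at hlen

lemma dropWhile_seg_ne_nil {v : ℕ} {seg : Komp} (hseg : IsBlock v seg)
    (hne : seg ≠ []) : seg.dropWhile (fun q => q.1 == 0) ≠ [] := by
  intro hdrop
  have hall := List.dropWhile_eq_nil_iff.mp hdrop
  have hl : seg.getLast hne ∈ seg := List.getLast_mem hne
  have hlast := hseg.2.2.2 (seg.getLast hne)
    (by rw [List.getLast?_eq_getLast (l := seg) hne]; rfl)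
  have := hall _ hl
  simp only [beq_iff_eq] at this
  exact hlast this

lemma mes_blackFirst {b : List ℕ} {g : Komp} (m : MesonicGlide b g) :
    BlackFirst g := by
  induction m with
  | zeros k =>
    intro p hp
    have : (List.replicate k ((0:ℕ), false)).dropWhile (fun q => q.1 == 0) = [] := by
      rw [List.dropWhile_eq_nil_iff]
      intro x hx
      have := List.eq_of_mem_replicate hx
      subst this; rfl
    rw [this] at hp; simp at hp
  | block z v hv seg a' g' hlen hseg h ih =>
    intro p hp
    have hne : seg ≠ [] := seg_ne_nil hseg hlen
    have hd := dropWhile_seg_ne_nil hseg hne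
    rw [List.dropWhile_append, if_neg (by simpa using hd)] at hp
    rw [List.head?_append_of_ne_nil _ hd] at hp
    exact hseg.2.2.1 p hp

lemma block_ext_nil {v : ℕ} {seg₁ seg₂ t g₂' : Komp} {a : List ℕ}
    (h₁ : IsBlock v seg₁) (h₂ : IsBlock v seg₂) (hs : seg₂ = seg₁ ++ t)
    (hm : MesonicGlide a (t ++ g₂')) : t = [] := by
  by_contra hne
  have hsum₁ := h₁.1
  have hsum₂ := h₂.1
  rw [hs, kval_append, kex_append, List.sum_append] at hsum₂
  have hsum_t : (kval t).sum = kex t := by omega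
  have hne₂ : seg₂ ≠ [] := by rw [hs]; simp [hne]
  have hlast₂ : (seg₂.getLast hne₂).1 ≠ 0 :=
    h₂.2.2.2 (seg₂.getLast hne₂) (by rw [List.getLast?_eq_getLast hne₂]; rfl)
  have hlast_eq : seg₂.getLast hne₂ = t.getLast hne := by
    have h' := List.getLast?_append (l := seg₁) (l' := t)
    rw [← hs, List.getLast?_eq_getLast hne₂, List.getLast?_eq_getLast (l := t) hne] at h'
    simpa using h'
  have hdt : t.dropWhile (fun q => q.1 == 0) ≠ [] := by
    intro hdrop
    have hall := List.dropWhile_eq_nil_iff.mp hdrop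
    have := hall _ (List.getLast_mem hne)
    simp only [beq_iff_eq] at this
    rw [hlast_eq] at hlast₂
    exact hlast₂ this
  set q := (t.dropWhile (fun q => q.1 == 0)).head hdt with hqdef
  have hq_mem : q ∈ t := (List.dropWhile_sublist _).subset (List.head_mem hdt)
  have hq_ne : q.1 ≠ 0 := by
    have := List.head_dropWhile_not (fun q => q.1 == 0) (l := t) hdt
    simpa using this
  have hbf : BlackFirst (t ++ g₂') := mes_blackFirst hm
  have hq_black : q.2 = false := by
    apply hbf q
    rw [List.dropWhile_append, if_neg (by simpa using hdt),
      List.head?_append_of_ne_nil _ hdt, List.head?_eq_head hdt]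
    exact Option.mem_some_iff.mpr hqdef.symm
  have hpos : ∀ p ∈ t, p.2 = true → 0 < p.1 := by
    intro p hp ht
    exact h₂.2.1 p (by rw [hs]; exact List.mem_append_right _ hp) ht
  have := kex_lt_sum hq_mem hq_black (Nat.pos_of_ne_zero hq_ne) hpos
  omega

lemma _root_.posPart_replicate_zero (k : ℕ) : _root_.posPart (List.replicate k 0) = [] := by
  show List.filter _ _ = _
  rw [List.filter_eq_nil_iff]
  intro a ha
  have := List.eq_of_mem_replicate ha
  subst this; simp

lemma _root_.posPart_block (z v : ℕ) (hv : 0 < v) (a' : List ℕ) :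
    _root_.posPart (List.replicate z 0 ++ v :: a') = v :: _root_.posPart a' := by
  have h0 : _root_.posPart (List.replicate z 0) = [] := _root_.posPart_replicate_zero z
  show List.filter _ _ = _
  rw [List.filter_append]
  have h0' : List.filter (fun v => v != 0) (List.replicate z 0) = [] := h0
  rw [h0', List.nil_append, List.filter_cons, if_pos (by simp [hv.ne'])]
  rfl

lemma mes_cases {b : List ℕ} {g : Komp} (m : MesonicGlide b g) :
    (b = List.replicate g.length 0 ∧ g = List.replicate g.length ((0:ℕ), false)) ∨
    ∃ z v seg a' g', 0 < v ∧ seg.length = z + 1 ∧ IsBlock v seg ∧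
      MesonicGlide a' g' ∧ b = List.replicate z 0 ++ v :: a' ∧ g = seg ++ g' := by
  cases m with
  | zeros k => left; simp
  | block z v hv seg a' g' hlen hseg h =>
    right; exact ⟨z, v, seg, a', g', hv, hlen, hseg, h, rfl, rfl⟩

lemma mes_unique {b₁ : List ℕ} {g : Komp} (m₁ : MesonicGlide b₁ g) :
    ∀ b₂ : List ℕ, MesonicGlide b₂ g → _root_.posPart b₁ = _root_.posPart b₂ → b₁ = b₂ := by
  induction m₁ with
  | zeros k =>
    intro b₂ m₂ hp
    rw [_root_.posPart_replicate_zero] at hp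
    rcases mes_cases m₂ with ⟨hb, _⟩ | ⟨z, v, seg, a', g', hv, hlen, hseg, h, hb, hg⟩
    · rw [hb]; simp
    · exfalso
      rw [hb, _root_.posPart_block z v hv a'] at hp
      exact List.cons_ne_nil _ _ hp.symm
  | block z v hv seg a' g' hlen hseg h ih =>
    intro b₂ m₂ hp
    rw [_root_.posPart_block z v hv a'] at hp
    rcases mes_cases m₂ with ⟨hb, hg⟩ | ⟨z₂, v₂, seg₂, a₂, g₂, hv₂, hlen₂, hseg₂, h₂, hb, hg⟩
    · exfalso
      rw [hb, _root_.posPart_replicate_zero] at hp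
      exact List.cons_ne_nil _ _ hp
    · rw [hb, _root_.posPart_block z₂ v₂ hv₂ a₂] at hp
      have hv_eq : v = v₂ := (List.cons.injEq _ _ _ _ ▸ hp).1
      have hpp : _root_.posPart a' = _root_.posPart a₂ := (List.cons.injEq _ _ _ _ ▸ hp).2
      subst hv_eq
      have heq : seg₂ ++ g₂ = seg ++ g' := hg.symm
      have hseg_eq : seg = seg₂ := by
        rcases List.append_eq_append_iff.mp heq with ⟨t, ht1, ht2⟩ | ⟨t, ht1, ht2⟩
        · have ht : t = [] := block_ext_nil hseg₂ hseg ht1 (ht2 ▸ h₂)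
          rw [ht1, ht, List.append_nil]
        · have ht : t = [] := block_ext_nil hseg hseg₂ ht1 (ht2 ▸ h)
          rw [ht1, ht, List.append_nil]
      have hg_eq : g' = g₂ := by
        rw [hseg_eq] at heq
        exact (List.append_cancel_left heq).symm
      have hz : z = z₂ := by
        have hl := hlen; rw [hseg_eq, hlen₂] at hl; omega
      have ha : a' = a₂ := ih a₂ (hg_eq ▸ h₂) hpp
      rw [hb, hz, ha]

theorem stmt0 (a : List ℕ) (g : Komp) (hg : IsGlide a g)
    (b₁ b₂ : List ℕ) (h₁ : posPart b₁ = posPart a) (h₂ : posPart b₂ = posPart a)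
    (m₁ : MesonicGlide b₁ g) (m₂ : MesonicGlide b₂ g) : b₁ = b₂ := by
  exact mes_unique m₁ b₂ m₂ (h₁.trans h₂.symm)
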